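/- Suppose P(g=1|x) = φ_g(v_gᵀx) with φ_g strictly increasing, and let S₀(B) = {x : θ_C − B ≤ wᵀx < θ_F − B} be the disagreement slab between two shifted parallel linear classifiers (w a unit vector with wᵀ·direction aligned so v_g ⊙ w > 0 componentwise). If B is large enough that φ_g(v_gᵀx) ≤ P(g=1) for all x ∈ S₀(B), then P(x ∈ S₀(B) | g=0) − P(x ∈ S₀(B) | g=1) ≥ 0, i.e. the fair (higher-threshold) classifier is at least as unfair as the base classifier on the shifted distribution. -/

import Mathlib

open Set MeasureTheory ProbabilityTheory
open scoped RealInnerProductSpace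

/-- Fairness reversal for shifted linear classifiers.  Suppose
`P(g=1|x) = φg(⟪v_g,x⟫)` with `φg` strictly increasing, the group prior is
`p = P(g=1) ∈ (0,1)`, and `S₀(B) = {x : θ_C − B ≤ ⟪w,x⟫ < θ_F − B}` is the
disagreement slab between the shifted classifiers (`w` a unit vector aligned
componentwise with `v_g`).  If `B` is large enough that
`φg(⟪v_g,x⟫) ≤ p` for all `x ∈ S₀(B)`, then
`P(x ∈ S₀(B) | g=0) − P(x ∈ S₀(B) | g=1) ≥ 0`: the fair (higher-threshold)
classifier is at least as unfair as the base classifier. -/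
theorem fairness_reversal_linear
    {Ω : Type*} [MeasurableSpace Ω] (d : ℕ)
    (μ : Measure Ω) [IsProbabilityMeasure μ]
    (X : Ω → EuclideanSpace ℝ (Fin d)) (G : Ω → Bool)
    (hX : Measurable X) (hG : Measurable G)
    (vg w : EuclideanSpace ℝ (Fin d)) (hw : ‖w‖ = 1)
    (halign : ∀ i, 0 < vg i * w i)
    (φg : ℝ → ℝ) (hφ : StrictMono φg)
    (p : ℝ) (hp : p = (μ {ω | G ω = true}).toReal) (hp0 : 0 < p) (hp1 : p < 1)
    (hcondprob : ∀ S : Set (EuclideanSpace ℝ (Fin d)), MeasurableSet S →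
      (μ ({ω | X ω ∈ S} ∩ {ω | G ω = true})).toReal
        = ∫ ω, S.indicator (fun _ => (1:ℝ)) (X ω) * φg ⟪vg, X ω⟫ ∂μ)
    (θC θF B : ℝ) (hθ : θC < θF)
    (S₀ : Set (EuclideanSpace ℝ (Fin d)))
    (hS₀ : S₀ = {x | θC - B ≤ ⟪w, x⟫ ∧ ⟪w, x⟫ < θF - B})
    (hbig : ∀ x ∈ S₀, φg ⟪vg, x⟫ ≤ p) :
    0 ≤ (μ[|{ω | G ω = false}] {ω | X ω ∈ S₀}).toReal
        - (μ[|{ω | G ω = true}] {ω | X ω ∈ S₀}).toReal := by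
  set T : Set Ω := {ω | G ω = true} with hT
  set F : Set Ω := {ω | G ω = false} with hFdef
  have hmT : MeasurableSet T := hG (measurableSet_singleton true)
  have hmF : MeasurableSet F := hG (measurableSet_singleton false)
  have hFcompl : F = Tᶜ := by
    ext ω; simp [hT, hFdef]
  -- measurability of S₀
  have hmS₀ : MeasurableSet S₀ := by
    have hcont : Measurable fun x : EuclideanSpace ℝ (Fin d) => ⟪w, x⟫ :=
      (innerSL ℝ w).continuous.measurable
    rw [hS₀]
    exact hcont measurableSet_Ico
  set A : Set Ω := {ω | X ω ∈ S₀} with hAdef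
  have hmA : MeasurableSet A := hX hmS₀
  -- key bound
  have key : (μ (A ∩ T)).toReal ≤ p * (μ A).toReal := by
    rw [hcondprob S₀ hmS₀]
    set f : Ω → ℝ := fun ω => S₀.indicator (fun _ => (1:ℝ)) (X ω) * φg ⟪vg, X ω⟫ with hf
    set g : Ω → ℝ := fun ω => A.indicator (fun _ => p) ω with hg
    have hgeq : ∀ ω, g ω = S₀.indicator (fun _ => (1:ℝ)) (X ω) * p := by
      intro ω
      by_cases h : X ω ∈ S₀
      · simp [hg, hAdef, Set.indicator_of_mem, h]
      · simp [hg, hAdef, Set.indicator_of_notMem, h]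
    have hint_g : Integrable g μ := (integrable_const p).indicator hmA
    have hle : ∀ ω, f ω ≤ g ω := by
      intro ω
      rw [hgeq ω]
      by_cases h : X ω ∈ S₀
      · simp only [hf, Set.indicator_of_mem h, one_mul]
        exact hbig _ h
      · simp [hf, Set.indicator_of_notMem h]
    have hgint : ∫ ω, g ω ∂μ = p * (μ A).toReal := by
      rw [hg, integral_indicator_const p hmA, smul_eq_mul, mul_comm, measureReal_def]
    by_cases hfint : Integrable f μ
    · calc ∫ ω, f ω ∂μ ≤ ∫ ω, g ω ∂μ := integral_mono hfint hint_g hle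
        _ = p * (μ A).toReal := hgint
    · rw [integral_undef hfint]
      have : (0:ℝ) ≤ (μ A).toReal := ENNReal.toReal_nonneg
      nlinarith
  -- split μ A
  have hsplit : (μ A).toReal = (μ (A ∩ T)).toReal + (μ (A ∩ F)).toReal := by
    have h1 : μ (A ∩ T) + μ (A \ T) = μ A := measure_inter_add_diff A hmT
    have h2 : A \ T = A ∩ F := by rw [hFcompl, diff_eq]
    rw [h2] at h1
    rw [← h1, ENNReal.toReal_add (measure_ne_top _ _) (measure_ne_top _ _)]
  -- μ F
  have hμF : (μ F).toReal = 1 - p := by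
    rw [hFcompl, measure_compl hmT (measure_ne_top _ _), measure_univ,
      ENNReal.toReal_sub_of_le prob_le_one ENNReal.one_ne_top, ENNReal.toReal_one, hp]
  have h1p : 0 < 1 - p := by linarith
  -- rewrite goal
  rw [cond_apply hmF μ A, cond_apply hmT μ A, ENNReal.toReal_mul, ENNReal.toReal_mul,
    ENNReal.toReal_inv, ENNReal.toReal_inv, hμF, ← hp]
  set a : ℝ := (μ (T ∩ A)).toReal with ha
  set b : ℝ := (μ (F ∩ A)).toReal with hb
  have ha' : (μ (A ∩ T)).toReal = a := by rw [ha, Set.inter_comm]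
  have hb' : (μ (A ∩ F)).toReal = b := by rw [hb, Set.inter_comm]
  rw [ha', hb'] at hsplit
  rw [ha'] at key
  rw [hsplit] at key
  have hbnn : 0 ≤ b := ENNReal.toReal_nonneg
  rw [sub_nonneg]
  rw [inv_mul_le_iff₀ hp0]
  rw [show p * ((1 - p)⁻¹ * b) = p * b / (1 - p) by ring, le_div_iff₀ h1p]
  nlinarith
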